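/- arXiv:math/0602191 — 2 statements merged into one kernel-verified Lean document; each statement's English description precedes it below -/
import Mathlib

section
/- Every d-degenerate finite simple graph G with n ≥ d vertices has at most 2^d·(n − d + 1) cliques. -/
/-- The number of cliques (sets of pairwise adjacent vertices, including the
empty clique) of a graph. -/
noncomputable def cliqueCount {V : Type*} (G : SimpleGraph V) : ℕ :=
  Nat.card {s : Finset V // G.IsClique (s : Set V)}

/-- A graph is `d`-degenerate if every nonempty set of vertices contains a
vertex with at most `d` neighbours in that set. -/
def IsDegenerate {V : Type*} (G : SimpleGraph V) (d : ℕ) : Prop :=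
  ∀ S : Finset V, S.Nonempty → ∃ v ∈ S, Nat.card {u ∈ (S : Set V) | G.Adj v u} ≤ d

open Classical in
lemma cliqueCount_eq_card {V : Type*} [Fintype V] (G : SimpleGraph V) :
    cliqueCount G = (Finset.univ.filter (fun s : Finset V => G.IsClique (s : Set V))).card := by
  rw [cliqueCount, Nat.card_eq_fintype_card]
  convert Fintype.card_subtype _

lemma cliqueCount_le_pow {V : Type*} [Fintype V] (G : SimpleGraph V) :
    cliqueCount G ≤ 2 ^ Fintype.card V := by
  have := Nat.card_le_card_of_injective (Subtype.val : {s : Finset V // G.IsClique (s : Set V)} → Finset V) Subtype.val_injective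
  simpa [cliqueCount, Nat.card_eq_fintype_card, Fintype.card_finset] using this

lemma isDegenerate_comap {V : Type*} [Fintype V] (G : SimpleGraph V) (d : ℕ)
    (hdeg : IsDegenerate G d) (v : V) :
    IsDegenerate (G.comap (Subtype.val : {u : V // u ≠ v} → V)) d := by
  intro S' hS'
  classical
  set S : Finset V := S'.map ⟨Subtype.val, Subtype.val_injective⟩ with hS
  obtain ⟨w, hwS, hw⟩ := hdeg S (by simpa [hS] using hS')
  rw [Finset.mem_map] at hwS
  obtain ⟨w', hw'S, rfl⟩ := hwS
  refine ⟨w', hw'S, le_trans ?_ hw⟩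
  have : Finite {u ∈ (S : Set V) | G.Adj (↑w') u} := Subtype.finite
  refine Nat.card_le_card_of_injective
    (fun x => ⟨x.val.val, ?_, x.2.2⟩) ?_
  · exact Finset.mem_coe.2 (Finset.mem_map.2 ⟨x.val, x.2.1, rfl⟩)
  · intro a b hab
    simp only [Subtype.mk.injEq] at hab
    exact Subtype.ext (Subtype.ext hab)

open Classical in
lemma aux_main : ∀ (n : ℕ) {V : Type u} [Fintype V] (G : SimpleGraph V) (d : ℕ),
    Fintype.card V = n → IsDegenerate G d → d ≤ n →
    cliqueCount G ≤ 2 ^ d * (n - d + 1) := by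
  intro n
  induction n with
  | zero =>
    intro V _ G d hcard hdeg hd
    interval_cases d
    simpa [hcard] using cliqueCount_le_pow G
  | succ n ih =>
    intro V _ G d hcard hdeg hd
    by_cases hdn : d ≤ n
    · -- pick low-degree vertex v
      have hne : (Finset.univ : Finset V).Nonempty := by
        rw [Finset.univ_nonempty_iff, ← Fintype.card_pos_iff, hcard]; omega
      obtain ⟨v, -, hv⟩ := hdeg Finset.univ hne
      set A : Set V := {u ∈ ((Finset.univ : Finset V) : Set V) | G.Adj v u} with hA0
      have hvA : A.toFinset.card ≤ d := by
        rw [Set.toFinset_card, ← Nat.card_eq_fintype_card]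
        exact hv
      set P : Finset V → Prop := fun s => G.IsClique (s : Set V) with hP
      have hsplit := Finset.card_filter_add_card_filter_not
        (s := Finset.univ.filter P) (p := fun s => v ∈ s)
      -- Bound A: cliques containing v
      have hA : ((Finset.univ.filter P).filter (fun s => v ∈ s)).card ≤ 2 ^ d := by
        have : ((Finset.univ.filter P).filter (fun s => v ∈ s)).card
            ≤ (A.toFinset.powerset).card := by
          apply Finset.card_le_card_of_injOn (fun s => s.erase v)
          · intro s hs
            simp only [Finset.mem_coe, Finset.mem_filter, Finset.mem_univ, true_and] at hs ⊢
            rw [Finset.mem_powerset]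
            intro u hu
            rw [Finset.mem_erase] at hu
            rw [Set.mem_toFinset, hA0]
            exact ⟨by simp, hs.1 (by simpa using hs.2) (by simpa using hu.2) (Ne.symm hu.1)⟩
          · intro s hs t ht hst
            simp only [Finset.coe_filter, Set.mem_setOf_eq] at hs ht
            rw [← Finset.insert_erase hs.2, ← Finset.insert_erase ht.2]
            exact congrArg (insert v) hst
        calc _ ≤ (A.toFinset.powerset).card := this
        _ = 2 ^ A.toFinset.card := Finset.card_powerset _
        _ ≤ 2 ^ d := Nat.pow_le_pow_right (by norm_num) hvA
      -- Bound B: cliques avoiding v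
      set G' := G.comap (Subtype.val : {u : V // u ≠ v} → V) with hG'
      have hcard' : Fintype.card {u : V // u ≠ v} = n := by
        have := Fintype.card_subtype_compl (fun u : V => u = v)
        simp only [Fintype.card_subtype_eq, hcard] at this
        simpa using this
      have hB : ((Finset.univ.filter P).filter (fun s => ¬ v ∈ s)).card ≤ cliqueCount G' := by
        rw [cliqueCount_eq_card]
        apply Finset.card_le_card_of_injOn (fun s => s.subtype (fun u => u ≠ v))
        · intro s hs
          simp only [Finset.mem_coe, Finset.mem_filter, Finset.mem_univ, true_and] at hs ⊢
          intro a ha b hb hab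
          simp only [Finset.mem_coe, Finset.mem_subtype] at ha hb
          exact hs.1 ha hb (fun h => hab (Subtype.ext h))
        · intro s hs t ht hst
          simp only [Finset.coe_filter, Set.mem_setOf_eq] at hs ht
          have h1 := congrArg (Finset.map (Function.Embedding.subtype _)) hst
          rwa [Finset.subtype_map, Finset.subtype_map,
            Finset.filter_eq_self.2 (fun u hu => by rintro rfl; exact hs.2 hu),
            Finset.filter_eq_self.2 (fun u hu => by rintro rfl; exact ht.2 hu)] at h1
      have hIH : cliqueCount G' ≤ 2 ^ d * (n - d + 1) :=
        ih G' d hcard' (isDegenerate_comap G d hdeg v) hdn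
      have hnd : n + 1 - d + 1 = (n - d + 1) + 1 := by omega
      calc cliqueCount G = (Finset.univ.filter P).card := cliqueCount_eq_card G
        _ ≤ 2 ^ d * (n + 1 - d + 1) := by rw [hnd, Nat.mul_succ]; omega
    · have hd' : d = n + 1 := by omega
      subst hd'
      have : cliqueCount G ≤ 2 ^ (n + 1) := hcard ▸ cliqueCount_le_pow G
      simpa using this

/-- Every `d`-degenerate graph with `n ≥ d` vertices has at most
`2^d·(n - d + 1)` cliques. -/
theorem clique_count_degenerate {V : Type*} [Fintype V] (G : SimpleGraph V)
    (d : ℕ) (hdeg : IsDegenerate G d) (hn : d ≤ Fintype.card V) :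
    cliqueCount G ≤ 2 ^ d * (Fintype.card V - d + 1) := by
  exact aux_main (Fintype.card V) G d rfl hdeg hn
end

section
/- Let d ≥ 1, and let n and m be integers with C(d,2) ≤ m ≤ d·n − C(d+1,2) such that m mod d = 0 if d is odd, and m mod d = d/2 if d is even. Then there exists a d-degenerate finite simple graph G with n vertices and m edges such that c(G) = n + (2^d − 1)·m/d − ((d − 3)·2^d + d + 1)/2. -/
open Finset

lemma choose_two_mul_two (d : ℕ) : d.choose 2 * 2 = d * (d - 1) := by
  rw [Nat.choose_two_right]
  apply Nat.div_mul_cancel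
  rcases Nat.even_or_odd d with h | h
  · exact Dvd.dvd.mul_right h.two_dvd _
  · rcases Nat.eq_zero_or_pos d with rfl | hp
    · simp
    · exact Dvd.dvd.mul_left (Nat.Odd.sub_odd h odd_one).two_dvd _

lemma exists_k (d m : ℕ) (hd : 1 ≤ d) (hm₁ : d.choose 2 ≤ m)
    (hmod : if Odd d then m % d = 0 else m % d = d / 2) :
    ∃ k, m = d.choose 2 + k * d := by
  have hc2 := choose_two_mul_two d
  have hmc : m % d = d.choose 2 % d := by
    rcases Nat.even_or_odd d with ⟨e, he⟩ | ⟨e, he⟩ <;> subst he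
    · -- even: d = e + e
      rw [if_neg (by rw [Nat.odd_iff]; omega)] at hmod
      have he1 : 1 ≤ e := by omega
      have hch : (e+e).choose 2 = (e+e) * (e - 1) + e := by
        have h1 : (e + e) * ((e + e) - 1) = (e + e) * (2 * (e - 1) + 1) := by
          congr 1; omega
        have h2 : (e + e) * (2 * (e - 1) + 1) = 2 * ((e + e) * (e - 1) + e) := by ring
        omega
      rw [hch, Nat.mul_add_mod, hmod, Nat.mod_eq_of_lt (by omega)]
      omega
    · rw [if_pos ⟨e, by omega⟩] at hmod
      have hch : (2*e+1).choose 2 = (2*e+1) * e := by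
        have h1 : (2 * e + 1) * ((2 * e + 1) - 1) = 2 * ((2 * e + 1) * e) := by
          rw [show (2 * e + 1) - 1 = 2 * e from by omega]; ring
        omega
      rw [hch, Nat.mul_mod_right, hmod]
  have hsub := Nat.sub_mod_eq_zero_of_mod_eq hmc
  obtain ⟨k, hk⟩ := Nat.dvd_of_mod_eq_zero hsub
  have := Nat.mul_comm d k
  exact ⟨k, by omega⟩

lemma k_bound (d n m k : ℕ) (hd : 1 ≤ d) (hm₂ : m + (d + 1).choose 2 ≤ d * n)
    (hk : m = d.choose 2 + k * d) : d + k ≤ n := by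
  obtain ⟨c, rfl⟩ : ∃ c, d = c + 1 := ⟨d - 1, by omega⟩
  have hc2 := choose_two_mul_two (c + 1)
  have hc2' := choose_two_mul_two (c + 2)
  rw [show (c + 1) - 1 = c from rfl] at hc2
  rw [show (c + 2) - 1 = c + 1 from rfl] at hc2'
  have hplus : c + 1 + 1 = c + 2 := rfl
  rw [hplus] at hm₂
  have hmul : (c + 1) * (2 * c + 2 * k + 2) ≤ (c + 1) * (2 * n) := by
    have e1 : (c + 1) * (2 * c + 2 * k + 2) = (c + 1) * c + 2 * (k * (c + 1)) + (c + 2) * (c + 1) := by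
      ring
    have e2 : (c + 1) * (2 * n) = 2 * ((c + 1) * n) := by ring
    omega
  have := Nat.le_of_mul_le_mul_left hmul (by omega)
  omega

lemma final_real (d k n : ℕ) (hd : 1 ≤ d) (hkn : d + k ≤ n) :
    ((2 ^ d * (k + 1) + (n - (d + k)) : ℕ) : ℝ)
      = n + (2 ^ d - 1) * (d.choose 2 + k * d : ℕ) / d -
        (((d : ℝ) - 3) * 2 ^ d + d + 1) / 2 := by
  have hc2 := choose_two_mul_two d
  have hcast : ((d.choose 2 + k * d : ℕ) : ℝ) = (d : ℝ) * ((d : ℝ) - 1) / 2 + k * d := by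
    have h1 : ((d.choose 2 : ℕ) : ℝ) * 2 = (d : ℝ) * ((d : ℝ) - 1) := by
      have h := congrArg (fun x : ℕ => (x : ℝ)) hc2
      push_cast [Nat.cast_sub hd] at h
      exact h
    push_cast
    linarith
  rw [hcast]
  have hd0 : (d : ℝ) ≠ 0 := Nat.cast_ne_zero.mpr (by omega)
  push_cast [Nat.cast_sub hkn]
  field_simp
  ring


def myGraph (n d t : ℕ) : SimpleGraph (Fin n) where
  Adj i j := i ≠ j ∧ min i.val j.val < d ∧ max i.val j.val < t
  symm := by
    constructor
    intro i j ⟨h1, h2, h3⟩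
    exact ⟨h1.symm, by omega, by omega⟩
  loopless := by constructor; intro i ⟨h, _⟩; exact h rfl

instance (n d t : ℕ) : DecidableRel (myGraph n d t).Adj := fun i j => by
  unfold myGraph; exact inferInstanceAs (Decidable (_ ∧ _))

lemma myGraph_adj {n d t : ℕ} {i j : Fin n} :
    (myGraph n d t).Adj i j ↔ i ≠ j ∧ min i.val j.val < d ∧ max i.val j.val < t :=
  Iff.rfl

lemma card_filter_val (n : ℕ) (p : ℕ → Prop) [DecidablePred p] :
    (univ.filter fun j : Fin n => p j.val).card = ((range n).filter p).card := by
  refine Finset.card_bij (fun a _ => a.val) ?_ ?_ ?_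
  · intro a ha; simp only [mem_filter, mem_univ, true_and] at ha
    simp [a.isLt, ha]
  · intro a _ b _ h; exact Fin.ext h
  · intro b hb; simp only [mem_filter, mem_range] at hb
    exact ⟨⟨b, hb.1⟩, by simp [hb.2], rfl⟩

lemma card_filter_lt (n t : ℕ) (h : t ≤ n) :
    (univ.filter fun j : Fin n => j.val < t).card = t := by
  have e : (univ.filter fun j : Fin n => j.val < t).card
      = ((range n).filter (fun x => x < t)).card := card_filter_val n (fun x => x < t)
  rw [e]
  have : (range n).filter (fun x => x < t) = range t := by
    ext x; simp; omega
  rw [this, card_range]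

lemma card_filter_Ico (n a b : ℕ) (h : b ≤ n) :
    (univ.filter fun j : Fin n => a ≤ j.val ∧ j.val < b).card = b - a := by
  have e : (univ.filter fun j : Fin n => a ≤ j.val ∧ j.val < b).card
      = ((range n).filter (fun x => a ≤ x ∧ x < b)).card :=
    card_filter_val n (fun x => a ≤ x ∧ x < b)
  rw [e]
  have : (range n).filter (fun x => a ≤ x ∧ x < b) = Ico a b := by
    ext x; simp; omega
  rw [this, Nat.card_Ico]

lemma myGraph_cliques (n d k : ℕ) (hd : 1 ≤ d) (htn : d + k ≤ n) :
    Nat.card {s : Finset (Fin n) // (myGraph n d (d+k)).IsClique (s : Set (Fin n))}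
      = 2^d * (k+1) + (n - (d+k)) := by
  classical
  set G := myGraph n d (d+k) with hG
  set D : Finset (Fin n) := univ.filter (fun v => v.val < d) with hD
  set K : Finset (Fin n) := univ.filter (fun v => d ≤ v.val ∧ v.val < d + k) with hK
  set F : Finset (Fin n) := univ.filter (fun v => d + k ≤ v.val) with hF
  set A : Finset (Finset (Fin n)) :=
    (D.powerset ∪ K.biUnion (fun w => D.powerset.image (insert w)))
    ∪ F.image (fun v => {v}) with hA
  have memD : ∀ v : Fin n, v ∈ D ↔ v.val < d := by intro v; simp [hD]
  have memK : ∀ v : Fin n, v ∈ K ↔ d ≤ v.val ∧ v.val < d + k := by intro v; simp [hK]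
  have memF : ∀ v : Fin n, v ∈ F ↔ d + k ≤ v.val := by intro v; simp [hF]
  have hfilter : univ.filter (fun s : Finset (Fin n) => G.IsClique (s : Set (Fin n))) = A := by
    ext s
    simp only [mem_filter, mem_univ, true_and, hA, mem_union, mem_biUnion, mem_image,
      mem_powerset]
    constructor
    · intro hs
      by_cases hFc : ∃ v ∈ s, d + k ≤ v.val
      · obtain ⟨v, hv, hvk⟩ := hFc
        right
        refine ⟨v, (memF v).mpr hvk, ?_⟩
        symm
        rw [Finset.eq_singleton_iff_unique_mem]
        refine ⟨hv, fun u hu => ?_⟩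
        by_contra hne
        have := hs (Finset.mem_coe.mpr hu) (Finset.mem_coe.mpr hv) hne
        rw [myGraph_adj] at this
        omega
      · push_neg at hFc
        left
        by_cases hKc : ∃ w ∈ s, d ≤ w.val
        · obtain ⟨w, hw, hwd⟩ := hKc
          right
          refine ⟨w, (memK w).mpr ⟨hwd, hFc w hw⟩, s.erase w, ?_, Finset.insert_erase hw⟩
          intro u hu
          rw [memD]
          have hne : u ≠ w := Finset.ne_of_mem_erase hu
          have := hs (Finset.mem_coe.mpr (Finset.mem_of_mem_erase hu))
            (Finset.mem_coe.mpr hw) hne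
          rw [myGraph_adj] at this
          omega
        · push_neg at hKc
          left
          intro u hu
          rw [memD]
          exact hKc u hu
    · rintro ((hsD | ⟨w, hwK, t, htD, rfl⟩) | ⟨v, hvF, rfl⟩)
      · intro a ha b hb hab
        have ha' := (memD a).mp (hsD ha)
        have hb' := (memD b).mp (hsD hb)
        rw [myGraph_adj]
        exact ⟨hab, by omega, by omega⟩
      · rw [memK] at hwK
        intro a ha b hb hab
        rw [myGraph_adj]
        refine ⟨hab, ?_, ?_⟩ <;>
        · simp only [Finset.coe_insert, Set.mem_insert_iff, Finset.mem_coe] at ha hb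
          rcases ha with rfl | ha
          · rcases hb with rfl | hb
            · exact absurd rfl hab
            · have := (memD b).mp (htD hb); omega
          · have haD := (memD a).mp (htD ha)
            rcases hb with rfl | hb
            · omega
            · have := (memD b).mp (htD hb); omega
      · intro a ha b hb hab
        simp only [Finset.coe_singleton, Set.mem_singleton_iff] at ha hb
        subst ha; subst hb; exact absurd rfl hab
  have hcount : Nat.card {s : Finset (Fin n) // G.IsClique (s : Set (Fin n))}
      = (univ.filter (fun s : Finset (Fin n) => G.IsClique (s : Set (Fin n)))).card := by
    rw [Nat.card_eq_fintype_card]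
    convert Fintype.card_subtype _
  rw [hcount, hfilter]
  -- now card computations
  have hcardD : D.card = d := card_filter_lt n d (by omega)
  have hcardK : K.card = k := by
    have := card_filter_Ico n d (d+k) htn
    rw [hK, this]; omega
  have hwD : ∀ w ∈ K, w ∉ D := by
    intro w hw; rw [memK] at hw; rw [memD]; omega
  have hinj : ∀ w ∈ K, ∀ t₁ ∈ D.powerset, ∀ t₂ ∈ D.powerset,
      insert w t₁ = insert w t₂ → t₁ = t₂ := by
    intro w hw t₁ h₁ t₂ h₂ h
    rw [mem_powerset] at h₁ h₂
    have hw₁ : w ∉ t₁ := fun hh => hwD w hw (h₁ hh)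
    have hw₂ : w ∉ t₂ := fun hh => hwD w hw (h₂ hh)
    rw [← Finset.erase_insert hw₁, ← Finset.erase_insert hw₂, h]
  have hbi : (K.biUnion (fun w => D.powerset.image (insert w))).card = k * 2^d := by
    rw [Finset.card_biUnion]
    · rw [Finset.sum_congr rfl (fun w hw => ?_), Finset.sum_const, hcardK, smul_eq_mul]
      rw [Finset.card_image_of_injOn (fun a ha b hb h => hinj w hw a ha b hb h),
        card_powerset, hcardD]
    · intro w hw w' hw' hne
      simp only [Finset.disjoint_left, mem_image, mem_powerset]
      rintro s ⟨t₁, ht₁, rfl⟩ ⟨t₂, ht₂, he⟩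
      have : w' ∈ insert w t₁ := he ▸ Finset.mem_insert_self w' t₂
      rcases Finset.mem_insert.mp this with h | h
      · exact hne h.symm
      · exact hwD w' hw' (ht₁ h)
  have hd1 : (D.powerset ∪ K.biUnion (fun w => D.powerset.image (insert w))).card
      = 2^d + k * 2^d := by
    rw [Finset.card_union_of_disjoint, card_powerset, hcardD, hbi]
    simp only [Finset.disjoint_left, mem_powerset, mem_biUnion, mem_image]
    rintro s hs ⟨w, hw, t, ht, rfl⟩
    exact hwD w hw (hs (Finset.mem_insert_self w t))
  have hcardF : (F.image (fun v => {v} : Fin n → Finset (Fin n))).card = n - (d+k) := by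
    rw [Finset.card_image_of_injective _ (fun a b h => Finset.singleton_injective h)]
    have he : F = univ.filter (fun v : Fin n => d + k ≤ v.val ∧ v.val < n) := by
      ext v; simp [hF, v.isLt]
    rw [he, card_filter_Ico n (d+k) n le_rfl]
  rw [Finset.card_union_of_disjoint, hd1, hcardF]
  · ring_nf
  · simp only [Finset.disjoint_left, mem_union, mem_powerset, mem_biUnion, mem_image]
    rintro s hs ⟨v, hvF, rfl⟩
    rw [memF] at hvF
    rcases hs with hs | ⟨w, hw, t, ht, he⟩
    · have := (memD v).mp (hs (Finset.mem_singleton_self v)); omega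
    · have : w ∈ ({v} : Finset (Fin n)) := he ▸ Finset.mem_insert_self w t
      rw [Finset.mem_singleton] at this
      rw [memK] at hw
      omega

lemma myGraph_degen (n d t : ℕ) : IsDegenerate (myGraph n d t) d := by
  intro S hS
  obtain ⟨v, hv, hvmax⟩ := S.exists_max_image (fun x => x.val) hS
  refine ⟨v, hv, ?_⟩
  have heq : {u ∈ (S : Set (Fin n)) | (myGraph n d t).Adj v u} =
      ↑(S.filter fun u => (myGraph n d t).Adj v u) := by
    ext u; simp
  rw [heq, Nat.card_coe_set_eq, Set.ncard_coe_finset]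
  have hsub : (S.filter fun u => (myGraph n d t).Adj v u) ⊆
      univ.filter (fun u : Fin n => u.val < d) := by
    intro u hu
    simp only [mem_filter, mem_univ, true_and] at hu ⊢
    obtain ⟨huS, hne, hmin, _⟩ := hu
    have h1 := hvmax u huS
    have : u.val < v.val := by
      rcases lt_or_eq_of_le h1 with h | h
      · exact h
      · exact absurd (Fin.ext h) (Ne.symm hne)
    omega
  calc (S.filter fun u => (myGraph n d t).Adj v u).card
      ≤ (univ.filter (fun u : Fin n => u.val < d)).card := card_le_card hsub
    _ ≤ (range d).card := by
        apply card_le_card_of_injOn (fun u => u.val) ?_ (fun a _ b _ h => Fin.ext h)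
        intro u hu
        simp only [coe_filter, mem_coe, mem_filter, mem_univ, true_and, Set.mem_setOf_eq] at hu
        simpa using hu
    _ = d := card_range d

lemma myGraph_deg_lo {n d t : ℕ} (hd : 1 ≤ d) (hdt : d ≤ t) (htn : t ≤ n)
    {v : Fin n} (hv : v.val < d) : (myGraph n d t).degree v = t - 1 := by
  rw [← SimpleGraph.card_neighborFinset_eq_degree]
  have : (myGraph n d t).neighborFinset v
      = (univ.filter fun j : Fin n => j.val < t).erase v := by
    ext j
    simp only [SimpleGraph.mem_neighborFinset, myGraph_adj, mem_erase, mem_filter,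
      mem_univ, true_and]
    constructor
    · rintro ⟨h1, h2, h3⟩; exact ⟨h1.symm, by omega⟩
    · rintro ⟨h1, h2⟩
      refine ⟨h1.symm, by omega, by omega⟩
  rw [this, card_erase_of_mem (by simp; omega), card_filter_lt n t htn]

lemma myGraph_deg_mid {n d t : ℕ} (hdn : d ≤ n)
    {v : Fin n} (hv1 : d ≤ v.val) (hv2 : v.val < t) : (myGraph n d t).degree v = d := by
  rw [← SimpleGraph.card_neighborFinset_eq_degree]
  have : (myGraph n d t).neighborFinset v
      = univ.filter fun j : Fin n => j.val < d := by
    ext j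
    simp only [SimpleGraph.mem_neighborFinset, myGraph_adj, mem_filter, mem_univ, true_and]
    constructor
    · rintro ⟨h1, h2, h3⟩; omega
    · intro h
      have hne : v ≠ j := by intro e; rw [e] at hv1; omega
      exact ⟨hne, by omega, by omega⟩
  rw [this, card_filter_lt n d hdn]

lemma myGraph_deg_hi {n d t : ℕ} {v : Fin n} (hv : t ≤ v.val) :
    (myGraph n d t).degree v = 0 := by
  rw [← SimpleGraph.card_neighborFinset_eq_degree]
  convert card_empty
  ext j
  simp only [SimpleGraph.mem_neighborFinset, myGraph_adj, notMem_empty, iff_false]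
  rintro ⟨h1, h2, h3⟩; omega

lemma myGraph_edges (n d k : ℕ) (hd : 1 ≤ d) (htn : d + k ≤ n) :
    Nat.card (myGraph n d (d + k)).edgeSet = d * (d-1) / 2 + k * d := by
  have key : ∑ v : Fin n, (myGraph n d (d+k)).degree v = d * (d + k - 1) + k * d := by
    rw [← Finset.sum_filter_add_sum_filter_not univ (fun v : Fin n => v.val < d)]
    have h1 : ∑ v ∈ univ.filter (fun v : Fin n => v.val < d),
        (myGraph n d (d+k)).degree v = d * (d + k - 1) := by
      rw [Finset.sum_congr rfl (fun v hv => myGraph_deg_lo hd (by omega) htn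
        (by simpa using (mem_filter.mp hv).2)), Finset.sum_const,
        card_filter_lt n d (by omega), smul_eq_mul]
    have h2 : ∑ v ∈ univ.filter (fun v : Fin n => ¬ v.val < d),
        (myGraph n d (d+k)).degree v = k * d := by
      rw [← Finset.sum_filter_add_sum_filter_not (univ.filter (fun v : Fin n => ¬ v.val < d))
        (fun v : Fin n => v.val < d + k)]
      have h21 : ∑ v ∈ (univ.filter (fun v : Fin n => ¬ v.val < d)).filter
          (fun v : Fin n => v.val < d + k), (myGraph n d (d+k)).degree v = k * d := by
        have he : (univ.filter (fun v : Fin n => ¬ v.val < d)).filter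
            (fun v : Fin n => v.val < d + k)
            = univ.filter (fun v : Fin n => d ≤ v.val ∧ v.val < d + k) := by
          ext v; simp only [mem_filter, mem_univ, true_and]; omega
        rw [he, Finset.sum_congr rfl (fun v hv => myGraph_deg_mid (by omega)
          (by simpa using (mem_filter.mp hv).2.1) (by simpa using (mem_filter.mp hv).2.2)),
          Finset.sum_const, card_filter_Ico n d (d+k) htn, smul_eq_mul,
          show d + k - d = k from by omega]
      have h22 : ∑ v ∈ (univ.filter (fun v : Fin n => ¬ v.val < d)).filter
          (fun v : Fin n => ¬ v.val < d + k), (myGraph n d (d+k)).degree v = 0 := by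
        apply Finset.sum_eq_zero
        intro v hv
        simp only [mem_filter] at hv
        exact myGraph_deg_hi (by omega)
      omega
    omega
  have h2m := SimpleGraph.sum_degrees_eq_twice_card_edges (myGraph n d (d+k))
  rw [key] at h2m
  rw [Nat.card_eq_fintype_card, ← SimpleGraph.edgeFinset_card]
  obtain ⟨c, hc⟩ : 2 ∣ d * (d-1) := by
    rcases Nat.even_or_odd d with h | h
    · exact Dvd.dvd.mul_right h.two_dvd _
    · exact Dvd.dvd.mul_left (Nat.Odd.sub_odd h odd_one).two_dvd _
  have hx : d * (d + k - 1) = d * (d-1) + d * k := by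
    rw [show d + k - 1 = (d-1) + k from by omega, Nat.mul_add]
  have hcomm : k * d = d * k := Nat.mul_comm k d
  omega

/-- For all `d ≥ 1` and `C(d,2) ≤ m ≤ dn - C(d+1,2)` with `m ≡ 0 (mod d)` when
`d` is odd and `m ≡ d/2 (mod d)` when `d` is even, there is a `d`-degenerate
graph with `n` vertices, `m` edges, and exactly
`n + (2^d - 1)·m/d - ((d - 3)·2^d + d + 1)/2` cliques. -/
theorem clique_count_degenerate_edges_exists (d n m : ℕ) (hd : 1 ≤ d)
    (hm₁ : d.choose 2 ≤ m) (hm₂ : m + (d + 1).choose 2 ≤ d * n)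
    (hmod : if Odd d then m % d = 0 else m % d = d / 2) :
    ∃ G : SimpleGraph (Fin n), IsDegenerate G d ∧ Nat.card G.edgeSet = m ∧
      (cliqueCount G : ℝ) = n + (2 ^ d - 1) * m / d -
        (((d : ℝ) - 3) * 2 ^ d + d + 1) / 2 := by
  obtain ⟨k, hk⟩ := exists_k d m hd hm₁ hmod
  have hkn : d + k ≤ n := k_bound d n m k hd hm₂ hk
  refine ⟨myGraph n d (d + k), myGraph_degen n d (d + k), ?_, ?_⟩
  · rw [myGraph_edges n d k hd hkn]
    have hc2 := choose_two_mul_two d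
    omega
  · rw [cliqueCount, myGraph_cliques n d k hd hkn, hk]
    exact final_real d k n hd hkn
end
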